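/- Let e=(u,y) be an edge with u <_X median(y), and suppose y has a neighbor x with median(y) <_X x. Then in the median heuristic's drawing, every edge crossing e either crosses the median edge (median(y), y) or is an intrusive edge for the valley ⟨u, y, x⟩. Consequently, if the median edge of y has at most k crossings and the valley has at most 2k intrusive edges, then e has at most 3k crossings. -/
import Mathlib


open scoped Classical

/-- Let `e = (u, y)` be an edge with `u <ₓ median y`, and suppose `y` has a neighbor
`x` with `median y <ₓ x`.  In the drawing produced by the median heuristic (any
linear order on `Y` extending the median order), every edge crossing `e` either
crosses the median edge `(median y, y)` or is an intrusive edge for the valley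
`⟨u, y, x⟩`.  Consequently, if the median edge of `y` has at most `k` crossings and
the valley has at most `2k` intrusive edges, then `e` has at most `3k` crossings. -/
theorem light_edge_crossing_bound
    {X Y : Type*} [LinearOrder X] [LinearOrder Y]
    (E : Finset (X × Y)) (median : Y → X)
    (hmedadj : ∀ y : Y, (median y, y) ∈ E)
    (hext : ∀ y₁ y₂ : Y, median y₁ < median y₂ → y₁ < y₂)
    (cross : X × Y → X × Y → Prop)
    (hcross : ∀ e f : X × Y,
      cross e f ↔ ((e.1 < f.1 ∧ f.2 < e.2) ∨ (f.1 < e.1 ∧ e.2 < f.2)))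
    (u x : X) (y : Y) (he : (u, y) ∈ E) (hu : u < median y)
    (hx : (x, y) ∈ E) (hxr : median y < x) (k : ℕ) :
    (∀ f ∈ E, cross (u, y) f →
      cross (median y, y) f ∨ (f.2 ≠ y ∧ u < f.1 ∧ f.1 < x)) ∧
    ((E.filter (fun f => cross (median y, y) f)).card ≤ k →
      (E.filter (fun f => f.2 ≠ y ∧ u < f.1 ∧ f.1 < x)).card ≤ 2 * k →
      (E.filter (fun f => cross (u, y) f)).card ≤ 3 * k) := by
  have main : ∀ f ∈ E, cross (u, y) f →
      cross (median y, y) f ∨ (f.2 ≠ y ∧ u < f.1 ∧ f.1 < x) := by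
    intro f hf hcf
    rw [hcross] at hcf
    rcases hcf with ⟨h1, h2⟩ | ⟨h1, h2⟩
    · by_cases hfx : f.1 < x
      · exact Or.inr ⟨ne_of_lt h2, h1, hfx⟩
      · left
        rw [hcross]
        exact Or.inl ⟨lt_of_lt_of_le hxr (le_of_not_gt hfx), h2⟩
    · left
      rw [hcross]
      exact Or.inr ⟨h1.trans hu, h2⟩
  refine ⟨main, fun h1 h2 => ?_⟩
  calc (E.filter (fun f => cross (u, y) f)).card
      ≤ ((E.filter (fun f => cross (median y, y) f)) ∪
         (E.filter (fun f => f.2 ≠ y ∧ u < f.1 ∧ f.1 < x))).card := by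
        apply Finset.card_le_card
        intro f hf
        simp only [Finset.mem_filter, Finset.mem_union] at *
        rcases main f hf.1 hf.2 with h | h
        · exact Or.inl ⟨hf.1, h⟩
        · exact Or.inr ⟨hf.1, h⟩
    _ ≤ _ + _ := Finset.card_union_le _ _
    _ ≤ k + 2 * k := Nat.add_le_add h1 h2
    _ = 3 * k := by ring
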